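/- Let K be a Kekulé cell over a finite set P. (a) If a port p ∈ P is flexible for K, then for every g ∈ K there is a channel c with p ∈ c and g ⊕ c ∈ K. (b) If K has a flexible port, then K has at least two flexible ports. -/
import Mathlib


open scoped symmDiff

namespace Kekule

abbrev Node := ℕ
abbrev Graph := Finset (Finset Node)

/-- `G` is a graph: every edge is a 2-element set of nodes. -/
def IsGraph (G : Graph) : Prop := ∀ e ∈ G, e.card = 2

/-- The nodes of a graph: the elements of its edges. -/
def nodes (G : Graph) : Finset Node := G.biUnion id

/-- The number of edges of `G` containing `v`. -/
def deg (G : Graph) (v : Node) : ℕ := (G.filter (fun e => v ∈ e)).card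

/-- A port is a node contained in exactly one edge. -/
def ports (G : Graph) : Finset Node := (nodes G).filter (fun v => deg G v = 1)

/-- An internal node is a node that is not a port. -/
def internal (G : Graph) : Finset Node := (nodes G).filter (fun v => deg G v ≠ 1)

/-- A Kekulé state of `G`: a subgraph `W ⊆ G` such that every internal node
of `G` lies in exactly one edge of `W`. -/
def IsKekule (G W : Graph) : Prop := W ⊆ G ∧ ∀ v ∈ internal G, deg W v = 1

/-- A curve in `G`: a subgraph `C ⊆ G` such that every node of `C` that is
internal in `G` lies in exactly two edges of `C`. -/
def IsCurve (G C : Graph) : Prop :=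
  C ⊆ G ∧ ∀ v ∈ nodes C, v ∈ internal G → deg C v = 2

/-- `(C, W)` is an alternating curve in `G`: both are subgraphs of `G`,
`C` is a curve in `G`, and `W ∩ C` is a Kekulé state of `C`. -/
def IsAlternating (G C W : Graph) : Prop :=
  W ⊆ G ∧ IsCurve G C ∧ IsKekule C (W ∩ C)

/-- `W|P`: the set of ports in `P` that lie in some edge of `W`. -/
def rest (W : Graph) (P : Finset Node) : Finset Node := P ∩ nodes W

/-- The set of Kekulé port assignments of `G`. -/
def KP (G : Graph) : Set (Finset Node) :=
  {g | ∃ W, IsKekule G W ∧ rest W (ports G) = g}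

/-- A cell `K` over `P` is a Kekulé cell if it is the set of Kekulé port
assignments of some graph with port set `P`. -/
def IsKekuleCell (P : Finset Node) (K : Set (Finset Node)) : Prop :=
  ∃ G, IsGraph G ∧ ports G = P ∧ KP G = K

/-- A channel: a 2-element subset of `P`. -/
def IsChannel (P : Finset Node) (c : Finset Node) : Prop := c ⊆ P ∧ c.card = 2

/-- A port `p` is flexible for a cell `K`. -/
def Flexible (K : Set (Finset Node)) (p : Node) : Prop :=
  ∃ g ∈ K, ∃ g' ∈ K, p ∈ g ∧ p ∉ g'

/-- Hamming distance between two port assignments. -/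
def hdist (k k' : Finset Node) : ℕ := (k ∆ k').card

/-- The Hamming diameter of `K` equals `n`. -/
def HamDiamEq (K : Set (Finset Node)) (n : ℕ) : Prop :=
  (∃ k ∈ K, ∃ k' ∈ K, hdist k k' = n) ∧ ∀ k ∈ K, ∀ k' ∈ K, hdist k k' ≤ n

/-- `G` is connected: nonempty, and any two distinct nodes are joined by a walk. -/
def Connected (G : Graph) : Prop :=
  G.Nonempty ∧ ∀ p ∈ nodes G, ∀ q ∈ nodes G, p ≠ q →
    ∃ (n : ℕ) (f : ℕ → Node), f 0 = p ∧ f n = q ∧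
      ∀ i < n, ({f i, f (i + 1)} : Finset Node) ∈ G

/-- `C` is a simple path between `p` and `q`. -/
def IsSimplePath (C : Graph) (p q : Node) : Prop :=
  Connected C ∧ ports C = {p, q} ∧
    ∀ v ∈ nodes C, v ≠ p → v ≠ q → deg C v = 2

/-- A cycle: a connected graph all of whose nodes lie in exactly two edges. -/
def IsCycle (C : Graph) : Prop :=
  Connected C ∧ ∀ v ∈ nodes C, deg C v = 2

/-- A semi-Kekulé state of `G`: every internal node of `G` lies in an odd
number of edges of `W`. -/
def IsSemiKekule (G W : Graph) : Prop :=
  W ⊆ G ∧ ∀ v ∈ internal G, deg W v % 2 = 1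

/-- The signature of `G`. -/
def sig (G : Graph) : ℕ := (internal G).card % 2

/-- `G` is omniconjugated. -/
def Omniconjugated (G : Graph) : Prop :=
  2 ≤ (ports G).card ∧ KP G = {g | g ⊆ ports G ∧ g.card % 2 = sig G}

instance : Std.Commutative (α := Finset Node) (· ∆ ·) := ⟨symmDiff_comm⟩
instance : Std.Associative (α := Finset Node) (· ∆ ·) := ⟨symmDiff_assoc⟩

/-- The `⊕`-sum of a finite family of port assignments. -/
def xorSum (D : Finset (Finset Node)) : Finset Node := D.fold (· ∆ ·) ∅ id


section Aux

lemma deg_mono {A B : Graph} (h : A ⊆ B) (v : Node) : deg A v ≤ deg B v :=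
  Finset.card_le_card (Finset.filter_subset_filter _ h)

lemma mem_nodes {A : Graph} {v : Node} : v ∈ nodes A ↔ deg A v ≠ 0 := by
  simp only [nodes, deg, Ne, Finset.card_eq_zero, Finset.filter_eq_empty_iff,
    Finset.mem_biUnion, id]
  push_neg
  rfl

lemma mem_ports' {G : Graph} {v : Node} : v ∈ ports G ↔ deg G v = 1 := by
  rw [ports, Finset.mem_filter, mem_nodes]
  omega

lemma mem_internal' {G : Graph} {v : Node} :
    v ∈ internal G ↔ deg G v ≠ 0 ∧ deg G v ≠ 1 := by
  rw [internal, Finset.mem_filter, mem_nodes]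

lemma filter_inter' (A B : Graph) (v : Node) :
    (A ∩ B).filter (fun e => v ∈ e) = A.filter (fun e => v ∈ e) ∩ B.filter (fun e => v ∈ e) := by
  ext e; simp; tauto

lemma filter_sdiff' (A B : Graph) (v : Node) :
    (A \ B).filter (fun e => v ∈ e) = A.filter (fun e => v ∈ e) \ B.filter (fun e => v ∈ e) := by
  ext e; simp; tauto

lemma filter_symmDiff' (A B : Graph) (v : Node) :
    (A ∆ B).filter (fun e => v ∈ e) = A.filter (fun e => v ∈ e) ∆ B.filter (fun e => v ∈ e) := by
  ext e; simp [Finset.mem_symmDiff]; tauto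

lemma deg_symmDiff_add (A B : Graph) (v : Node) :
    deg (A ∆ B) v + 2 * deg (A ∩ B) v = deg A v + deg B v := by
  unfold deg
  rw [filter_symmDiff', filter_inter']
  set a := A.filter (fun e => v ∈ e)
  set b := B.filter (fun e => v ∈ e)
  have h1 : (a ∆ b).card + (a ∩ b).card = (a ∪ b).card := by
    rw [← Finset.card_union_of_disjoint]
    · congr 1
      exact symmDiff_sup_inf a b
    · exact disjoint_symmDiff_inf a b
  have h2 := Finset.card_union_add_card_inter a b
  omega

lemma deg_inter_sdiff (A B : Graph) (v : Node) :
    deg (A ∩ B) v + deg (A \ B) v = deg A v := by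
  unfold deg
  rw [filter_inter', filter_sdiff']
  rw [← Finset.card_sdiff_add_card_inter (A.filter (fun e => v ∈ e)) (B.filter (fun e => v ∈ e))]
  omega

lemma deg_erase {D : Graph} {e : Finset Node} {v : Node} (he : e ∈ D) :
    deg (D.erase e) v = deg D v - (if v ∈ e then 1 else 0) := by
  unfold deg
  rw [Finset.filter_erase]
  by_cases h : v ∈ e
  · rw [Finset.card_erase_of_mem (by simp [he, h]), if_pos h]
  · rw [Finset.erase_eq_of_notMem (by simp [h]), if_neg h]; omega

lemma deg_insert {C : Graph} {e : Finset Node} {v : Node} (he : e ∉ C) :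
    deg (insert e C) v = deg C v + (if v ∈ e then 1 else 0) := by
  unfold deg
  rw [Finset.filter_insert]
  by_cases h : v ∈ e
  · rw [if_pos h, Finset.card_insert_of_notMem (by simp [he]), if_pos h]
  · rw [if_neg h, if_neg h]; omega

lemma kekule_deg_le {G W : Graph} (hW : IsKekule G W) : ∀ v, deg W v ≤ 1 := by
  intro v
  by_cases hv : deg G v = 0
  · have := deg_mono hW.1 v
    omega
  · by_cases h1 : deg G v = 1
    · exact (deg_mono hW.1 v).trans (le_of_eq h1)
    · exact le_of_eq (hW.2 v (mem_internal'.mpr ⟨hv, h1⟩))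

lemma extract : ∀ n : ℕ, ∀ D : Graph, D.card ≤ n → (∀ e ∈ D, e.card = 2) →
    (∀ v, deg D v ≤ 2) → ∀ p, deg D p = 1 →
    ∃ C, C ⊆ D ∧ ∃ q, q ≠ p ∧ deg D q = 1 ∧ deg C p = 1 ∧ deg C q = 1 ∧
      ∀ v, v ≠ p → v ≠ q → (deg C v = 0 ∨ deg C v = 2) := by
  intro n
  induction n with
  | zero =>
    intro D hc _ _ p hp
    rw [Nat.le_zero, Finset.card_eq_zero] at hc
    subst hc
    simp [deg] at hp
  | succ n ih =>
    intro D hc h2 hdeg p hp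
    obtain ⟨e, hfe⟩ := Finset.card_eq_one.mp hp
    have heD : e ∈ D ∧ p ∈ e := by
      have : e ∈ D.filter (fun e => p ∈ e) := hfe ▸ Finset.mem_singleton_self e
      simpa using this
    obtain ⟨heD, hpe⟩ := heD
    obtain ⟨a, b, hab, hab2⟩ := Finset.card_eq_two.mp (h2 e heD)
    obtain ⟨x, hxp, hex⟩ : ∃ x, x ≠ p ∧ e = {p, x} := by
      subst hab2
      rcases Finset.mem_insert.mp hpe with h | h
      · exact ⟨b, fun h' => hab (h ▸ h'.symm), by rw [h]⟩
      · rw [Finset.mem_singleton] at h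
        exact ⟨a, fun h' => hab (h' ▸ h.symm ▸ rfl), by rw [h, Finset.pair_comm]⟩
    have hxe : x ∈ e := by rw [hex]; simp
    have hdx1 : 1 ≤ deg D x := by
      have : e ∈ D.filter (fun e' => x ∈ e') := by simp [heD, hxe]
      exact Finset.card_pos.mpr ⟨e, this⟩
    set D' := D.erase e with hD'
    have hD'sub : D' ⊆ D := Finset.erase_subset _ _
    have hdegp' : deg D' p = 0 := by rw [deg_erase heD, if_pos hpe, hp]
    rcases Nat.lt_or_ge (deg D x) 2 with hdx | hdx
    · refine ⟨{e}, by simp [heD], x, hxp, by omega, ?_, ?_, ?_⟩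
      · simp [deg, Finset.filter_singleton, hpe]
      · simp [deg, Finset.filter_singleton, hxe]
      · intro v hvp hvx
        left
        have : v ∉ e := by rw [hex]; simp [hvp, hvx]
        simp [deg, Finset.filter_singleton, this]
    · have hdx2 : deg D x = 2 := le_antisymm (hdeg x) hdx
      have hdx' : deg D' x = 1 := by rw [deg_erase heD, if_pos hxe, hdx2]
      have hc' : D'.card ≤ n := by
        have h := Finset.card_erase_lt_of_mem heD
        rw [← hD'] at h
        omega
      obtain ⟨C', hC'sub, q, hqx, hdq', hCx, hCq, hCother⟩ :=
        ih D' hc' (fun e' he' => h2 e' (hD'sub he'))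
          (fun v => (deg_mono hD'sub v).trans (hdeg v)) x hdx'
      have hqp : q ≠ p := by
        intro h; rw [h] at hdq'; omega
      have hqe : q ∉ e := by rw [hex]; simp [hqp, hqx]
      have hdq : deg D q = 1 := by
        rw [deg_erase heD, if_neg hqe] at hdq'; omega
      have heC' : e ∉ C' := fun h => (Finset.notMem_erase e D) (hC'sub h)
      refine ⟨insert e C', ?_, q, hqp, hdq, ?_, ?_, ?_⟩
      · intro f hf
        rcases Finset.mem_insert.mp hf with h | h
        · exact h ▸ heD
        · exact hD'sub (hC'sub h)
      · have : deg C' p = 0 := by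
          have := deg_mono hC'sub p
          omega
        rw [deg_insert heC', if_pos hpe, this]
      · rw [deg_insert heC', if_neg hqe, hCq]
      · intro v hvp hvq
        by_cases hvx : v = x
        · subst hvx
          right
          rw [deg_insert heC', if_pos hxe, hCx]
        · have hve : v ∉ e := by rw [hex]; simp [hvp, hvx]
          rw [deg_insert heC', if_neg hve]
          simpa using hCother v hvx hvq

lemma flip (G W W' : Graph) (hG : IsGraph G) (hW : IsKekule G W) (hW' : IsKekule G W')
    (p : Node) (hp : p ∈ ports G) (hne : deg W p ≠ deg W' p) :
    ∃ q, q ∈ ports G ∧ q ≠ p ∧ ∃ W'' : Graph, IsKekule G W'' ∧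
      rest W'' (ports G) = rest W (ports G) ∆ ({p, q} : Finset Node) := by
  have hWle := kekule_deg_le hW
  have hW'le := kekule_deg_le hW'
  set D := W ∆ W' with hD
  have hDG : D ⊆ G := by
    intro e he
    rcases Finset.mem_symmDiff.mp he with ⟨h, _⟩ | ⟨h, _⟩
    · exact hW.1 h
    · exact hW'.1 h
  have hDdeg : ∀ v, deg D v ≤ 2 := by
    intro v
    have h := deg_symmDiff_add W W' v
    rw [← hD] at h
    have := hWle v
    have := hW'le v
    omega
  have hDp : deg D p = 1 := by
    have h := deg_symmDiff_add W W' p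
    rw [← hD] at h
    have hi : deg (W ∩ W') p ≤ deg W p := deg_mono Finset.inter_subset_left p
    have := hWle p
    have := hW'le p
    omega
  have hDint : ∀ v ∈ internal G, deg D v ≠ 1 := by
    intro v hv
    have h1 := hW.2 v hv
    have h2 := hW'.2 v hv
    have h := deg_symmDiff_add W W' v
    rw [← hD] at h
    omega
  obtain ⟨C, hCD, q, hqp, hdq, hCp, hCq, hCo⟩ :=
    extract D.card D le_rfl (fun e he => hG e (hDG he)) hDdeg p hDp
  have hCG : C ⊆ G := fun e he => hDG (hCD he)
  have hqport : q ∈ ports G := by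
    rw [mem_ports']
    have hle := deg_mono hDG q
    have hni : q ∉ internal G := fun h => hDint q h hdq
    rw [mem_internal'] at hni
    push_neg at hni
    omega
  have hpint : ∀ v ∈ internal G, v ≠ p ∧ v ≠ q := by
    intro v hv
    rw [mem_internal'] at hv
    rw [mem_ports'] at hp hqport
    constructor
    · rintro rfl; omega
    · rintro rfl; omega
  set W'' := W ∆ C with hW''
  have hsub : W'' ⊆ G := by
    intro e he
    rcases Finset.mem_symmDiff.mp he with ⟨h, _⟩ | ⟨h, _⟩
    · exact hW.1 h
    · exact hCG h
  have hCW'v : ∀ v, deg (C \ W) v ≤ deg W' v := by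
    intro v
    apply deg_mono
    intro e he
    rw [Finset.mem_sdiff] at he
    rcases Finset.mem_symmDiff.mp (hCD he.1) with ⟨h, _⟩ | ⟨h, _⟩
    · exact absurd h he.2
    · exact h
  have hkek : IsKekule G W'' := by
    refine ⟨hsub, ?_⟩
    intro v hv
    obtain ⟨hvp, hvq⟩ := hpint v hv
    have h1 := hW.2 v hv
    have h2 := hW'.2 v hv
    have hs := deg_symmDiff_add W C v
    rw [← hW''] at hs
    have hci := deg_inter_sdiff C W v
    have hCWv := hCW'v v
    have hint : deg (W ∩ C) v = deg (C ∩ W) v := by rw [Finset.inter_comm]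
    have hiw : deg (W ∩ C) v ≤ deg W v := deg_mono Finset.inter_subset_left v
    rcases hCo v hvp hvq with h | h <;> omega
  have hW''le := kekule_deg_le hkek
  refine ⟨q, hqport, hqp, W'', hkek, ?_⟩
  ext r
  simp only [rest, Finset.mem_inter, Finset.mem_symmDiff, Finset.mem_insert,
    Finset.mem_singleton]
  by_cases hr : r ∈ ports G
  · have hrdeg : deg G r = 1 := mem_ports'.mp hr
    have hWr := hWle r
    have hW''r := hW''le r
    have hCrle : deg C r ≤ 1 := (deg_mono hCG r).trans (le_of_eq hrdeg)
    have hs := deg_symmDiff_add W C r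
    rw [← hW''] at hs
    have hiC : deg (W ∩ C) r ≤ deg C r := deg_mono Finset.inter_subset_right r
    have hiW : deg (W ∩ C) r ≤ deg W r := deg_mono Finset.inter_subset_left r
    by_cases hrp : r = p
    · subst hrp
      rw [hCp] at hs
      have key : r ∈ nodes W'' ↔ r ∉ nodes W := by
        rw [mem_nodes, mem_nodes]
        omega
      have hrr : r = r := rfl
      have hne' : ¬ (r = q) := fun h => hqp h.symm
      tauto
    · by_cases hrq : r = q
      · subst hrq
        rw [hCq] at hs
        have key : r ∈ nodes W'' ↔ r ∉ nodes W := by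
          rw [mem_nodes, mem_nodes]
          omega
        have hrr : r = r := rfl
        tauto
      · have hC0 : deg C r = 0 := by
          rcases hCo r hrp hrq with h | h
          · exact h
          · omega
        rw [hC0] at hs
        have key : r ∈ nodes W'' ↔ r ∈ nodes W := by
          rw [mem_nodes, mem_nodes]
          omega
        tauto
  · have h1 : ¬ (r = p) := fun h => hr (h ▸ hp)
    have h2 : ¬ (r = q) := fun h => hr (h ▸ hqport)
    tauto

end Aux

/-- (a) If `p` is flexible for a Kekulé cell `K`, then for every
`g ∈ K` there is a channel `c` with `p ∈ c` and `g ⊕ c ∈ K`.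
(b) If `K` has a flexible port, it has at least two flexible ports. -/
theorem statement6 (P : Finset Node) (K : Set (Finset Node))
    (hK : IsKekuleCell P K) :
    (∀ p ∈ P, Flexible K p → ∀ g ∈ K,
        ∃ c : Finset Node, IsChannel P c ∧ p ∈ c ∧ g ∆ c ∈ K) ∧
    ((∃ p, Flexible K p) → ∃ p q, p ≠ q ∧ Flexible K p ∧ Flexible K q) := by
  obtain ⟨G, hG, hPG, hKP⟩ := hK
  have partA : ∀ p ∈ P, Flexible K p → ∀ g ∈ K,
      ∃ c : Finset Node, IsChannel P c ∧ p ∈ c ∧ g ∆ c ∈ K := by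
    intro p hpP hflex g hg
    have hg' : g ∈ KP G := by rw [hKP]; exact hg
    obtain ⟨W, hW, hWg⟩ := hg'
    obtain ⟨g1, hg1, g2, hg2, hpg1, hpg2⟩ := hflex
    have hg1' : g1 ∈ KP G := by rw [hKP]; exact hg1
    have hg2' : g2 ∈ KP G := by rw [hKP]; exact hg2
    obtain ⟨W1, hW1, hW1g⟩ := hg1'
    obtain ⟨W2, hW2, hW2g⟩ := hg2'
    have hpports : p ∈ ports G := hPG ▸ hpP
    have hd1 : deg W1 p = 1 := by
      have hn : p ∈ nodes W1 := by
        have := hW1g ▸ hpg1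
        exact (Finset.mem_inter.mp this).2
      rw [mem_nodes] at hn
      have := kekule_deg_le hW1 p
      omega
    have hd2 : deg W2 p = 0 := by
      have hn : p ∉ nodes W2 := by
        intro h
        exact hpg2 (hW2g ▸ (Finset.mem_inter.mpr ⟨hpports, h⟩))
      rw [mem_nodes] at hn
      omega
    have hWp := kekule_deg_le hW p
    obtain ⟨W', hW', hne⟩ : ∃ W', IsKekule G W' ∧ deg W p ≠ deg W' p := by
      by_cases h : deg W p = 0
      · exact ⟨W1, hW1, by omega⟩
      · exact ⟨W2, hW2, by omega⟩
    obtain ⟨q, hq, hqp, W'', hkek, hrest⟩ := flip G W W' hG hW hW' p hpports hne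
    refine ⟨{p, q}, ⟨?_, ?_⟩, by simp, ?_⟩
    · intro r hr
      rcases Finset.mem_insert.mp hr with rfl | hr
      · exact hpP
      · rw [Finset.mem_singleton] at hr
        subst hr
        exact hPG ▸ hq
    · exact Finset.card_pair (Ne.symm hqp)
    · rw [← hKP]
      exact ⟨W'', hkek, by rw [hrest, hWg]⟩
  refine ⟨partA, ?_⟩
  rintro ⟨p, hflex⟩
  have hpP : p ∈ P := by
    obtain ⟨g1, hg1, _, _, hpg1, _⟩ := hflex
    have hg1' : g1 ∈ KP G := by rw [hKP]; exact hg1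
    obtain ⟨W1, hW1, hW1g⟩ := hg1'
    have := hW1g ▸ hpg1
    rw [rest, Finset.mem_inter] at this
    exact hPG ▸ this.1
  obtain ⟨g1, hg1, g2, hg2, hpg1, hpg2⟩ := hflex
  obtain ⟨c, ⟨hcP, hc2⟩, hpc, hgc⟩ :=
    partA p hpP ⟨g1, hg1, g2, hg2, hpg1, hpg2⟩ g1 hg1
  obtain ⟨a, b, hab, rfl⟩ := Finset.card_eq_two.mp hc2
  obtain ⟨q, hqp, hqc⟩ : ∃ q, q ≠ p ∧ q ∈ ({a, b} : Finset Node) := by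
    rcases Finset.mem_insert.mp hpc with rfl | h
    · exact ⟨b, fun h' => hab h'.symm, by simp⟩
    · rw [Finset.mem_singleton] at h
      subst h
      exact ⟨a, fun h' => hab h', by simp⟩
  refine ⟨p, q, Ne.symm hqp, ⟨g1, hg1, g2, hg2, hpg1, hpg2⟩, ?_⟩
  by_cases hq1 : q ∈ g1
  · refine ⟨g1, hg1, g1 ∆ {a, b}, hgc, hq1, ?_⟩
    rw [Finset.mem_symmDiff]
    tauto
  · refine ⟨g1 ∆ {a, b}, hgc, g1, hg1, ?_, hq1⟩
    rw [Finset.mem_symmDiff]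
    tauto
end Kekule
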